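/- arXiv:1909.01918 — 2 statements merged into one kernel-verified Lean document; each statement's English description precedes it below -/
import Mathlib

section
/- If G₁ and G₂ are graphs with at least one vertex each, then any orthogonal d-coloring of the join G₁ ∧ G₂ satisfies d ≥ π(G₁) + π(G₂); hence π(G₁ ∧ G₂) = π(G₁) + π(G₂). -/
open scoped RealInnerProductSpace

/-- An orthogonal vector `d`-coloring of a graph: nonzero vectors of `ℝ^d` assigned to
vertices such that adjacent vertices receive orthogonal vectors. -/
def IsOrthColoring {V : Type*} (G : SimpleGraph V) (d : ℕ)
    (f : V → EuclideanSpace ℝ (Fin d)) : Prop :=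
  (∀ v, f v ≠ 0) ∧ ∀ ⦃u v⦄, G.Adj u v → ⟪f u, f v⟫ = 0

/-- The orthogonal number `π(G)`: least `d` admitting an orthogonal `d`-coloring. -/
noncomputable def orthNumber {V : Type*} (G : SimpleGraph V) : ℕ :=
  sInf {d | ∃ f, IsOrthColoring G d f}

/-- An orthogonal `d`-edge-coloring: nonzero vectors of `ℝ^d` on edges, with edges
sharing an endpoint receiving orthogonal vectors. -/
def IsOrthEdgeColoring {V : Type*} (G : SimpleGraph V) (d : ℕ)
    (f : G.edgeSet → EuclideanSpace ℝ (Fin d)) : Prop :=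
  (∀ e, f e ≠ 0) ∧ ∀ ⦃e e'⦄, (G.lineGraph).Adj e e' → ⟪f e, f e'⟫ = 0

/-- The orthogonal index `π'(G)`: least `d` admitting an orthogonal `d`-edge-coloring. -/
noncomputable def orthIndex {V : Type*} (G : SimpleGraph V) : ℕ :=
  sInf {d | ∃ f, IsOrthEdgeColoring G d f}

/-- The chromatic index of `G` is the chromatic number of its line graph. -/
noncomputable def chromIndex {V : Type*} (G : SimpleGraph V) : ℕ∞ :=
  (G.lineGraph).chromaticNumber

/-- The join of two graphs: disjoint union plus all edges across. -/
def joinGraph {V₁ V₂ : Type*} (G₁ : SimpleGraph V₁) (G₂ : SimpleGraph V₂) :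
    SimpleGraph (V₁ ⊕ V₂) where
  Adj u v := match u, v with
    | .inl a, .inl b => G₁.Adj a b
    | .inr a, .inr b => G₂.Adj a b
    | _, _ => True
  symm := by constructor; rintro (a|a) (b|b) h <;> simp_all [SimpleGraph.adj_comm]
  loopless := by constructor; rintro (a|a) h <;> simp_all

/-- The orthogonality graph of a set of vectors: vertices are the vectors in `S`,
two distinct vectors adjacent iff orthogonal. -/
def orthGraph (d : ℕ) (S : Set (EuclideanSpace ℝ (Fin d))) : SimpleGraph S where
  Adj u v := u ≠ v ∧ ⟪(u : EuclideanSpace ℝ (Fin d)), (v : EuclideanSpace ℝ (Fin d))⟫ = 0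
  symm := by
    constructor
    rintro u v ⟨h1, h2⟩
    exact ⟨h1.symm, by rwa [real_inner_comm]⟩
  loopless := by constructor; rintro u ⟨h, -⟩; exact h rfl

-- Auxiliary lemmas
-- orthNumber ≤ d given a coloring
lemma orthNumber_le {V : Type*} {G : SimpleGraph V} {d : ℕ}
    {f : V → EuclideanSpace ℝ (Fin d)} (hf : IsOrthColoring G d f) :
    orthNumber G ≤ d :=
  Nat.sInf_le ⟨f, hf⟩

lemma orthNumber_spec {V : Type*} {G : SimpleGraph V} {d : ℕ}
    {f : V → EuclideanSpace ℝ (Fin d)} (hf : IsOrthColoring G d f) :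
    ∃ g, IsOrthColoring G (orthNumber G) g :=
  Nat.sInf_mem (⟨d, f, hf⟩ : {d | ∃ f, IsOrthColoring G d f}.Nonempty)

-- key subspace lemma: restrict coloring to a finite-dim subspace it lives in
lemma coloring_of_span {V : Type*} {G : SimpleGraph V} {d : ℕ}
    {f : V → EuclideanSpace ℝ (Fin d)} (hf : IsOrthColoring G d f) :
    orthNumber G ≤ Module.finrank ℝ (Submodule.span ℝ (Set.range f)) := by
  set U := Submodule.span ℝ (Set.range f) with hU
  have hmem : ∀ v, f v ∈ U := fun v => Submodule.subset_span ⟨v, rfl⟩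
  let B := stdOrthonormalBasis ℝ U
  refine orthNumber_le (f := fun v => B.repr ⟨f v, hmem v⟩) ⟨fun v hv => ?_, fun u v huv => ?_⟩
  · apply hf.1 v
    have : (⟨f v, hmem v⟩ : U) = 0 := by
      simpa using B.repr.map_eq_zero_iff.mp hv
    simpa [Submodule.mk_eq_zero] using this
  · rw [B.repr.inner_map_map]
    simpa [Submodule.coe_inner] using hf.2 huv

lemma key_le {V₁ V₂ : Type*} (G₁ : SimpleGraph V₁) (G₂ : SimpleGraph V₂) (d : ℕ)
    (f : V₁ ⊕ V₂ → EuclideanSpace ℝ (Fin d))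
    (hf : IsOrthColoring (joinGraph G₁ G₂) d f) :
    orthNumber G₁ + orthNumber G₂ ≤ d := by
  have h₁ : IsOrthColoring G₁ d (fun a => f (Sum.inl a)) :=
    ⟨fun a => hf.1 _, fun a b h => hf.2 (show (joinGraph G₁ G₂).Adj (Sum.inl a) (Sum.inl b) from h)⟩
  have h₂ : IsOrthColoring G₂ d (fun a => f (Sum.inr a)) :=
    ⟨fun a => hf.1 _, fun a b h => hf.2 (show (joinGraph G₁ G₂).Adj (Sum.inr a) (Sum.inr b) from h)⟩
  set U := Submodule.span ℝ (Set.range (fun a => f (Sum.inl a))) with hU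
  set W := Submodule.span ℝ (Set.range (fun b => f (Sum.inr b))) with hW
  have hWU : W ≤ Uᗮ := by
    rw [hW, Submodule.span_le]
    rintro x ⟨b, rfl⟩
    rw [SetLike.mem_coe, Submodule.mem_orthogonal]
    intro u hu
    induction hu using Submodule.span_induction with
    | mem x hx =>
      obtain ⟨a, rfl⟩ := hx
      exact hf.2 (show (joinGraph G₁ G₂).Adj (Sum.inl a) (Sum.inr b) from trivial)
    | zero => simp
    | add x y hx hy px py => simp [inner_add_left, px, py]
    | smul c x hx px => simp [inner_smul_left, px]
  have e1 : orthNumber G₁ ≤ Module.finrank ℝ U := coloring_of_span h₁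
  have e2 : orthNumber G₂ ≤ Module.finrank ℝ W := coloring_of_span h₂
  have e3 : Module.finrank ℝ W ≤ Module.finrank ℝ Uᗮ := Submodule.finrank_mono hWU
  have e4 : Module.finrank ℝ U + Module.finrank ℝ Uᗮ = d := by
    rw [Submodule.finrank_add_finrank_orthogonal U, finrank_euclideanSpace_fin]
  omega

lemma join_coloring {V₁ V₂ : Type*} {G₁ : SimpleGraph V₁} {G₂ : SimpleGraph V₂}
    {c₁ c₂ : ℕ} {g₁ : V₁ → EuclideanSpace ℝ (Fin c₁)} {g₂ : V₂ → EuclideanSpace ℝ (Fin c₂)}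
    (h₁ : IsOrthColoring G₁ c₁ g₁) (h₂ : IsOrthColoring G₂ c₂ g₂) :
    ∃ f, IsOrthColoring (joinGraph G₁ G₂) (c₁ + c₂) f := by
  have hlt : ∀ x : Fin c₁, ((x : ℕ) < c₁) = True := fun x => eq_true x.isLt
  have hge : ∀ x : Fin c₂, (c₁ + (x : ℕ) < c₁) = False := fun x => eq_false (by omega)
  have hmk : ∀ (x : Fin c₂) (h : c₁ + (x : ℕ) - c₁ < c₂),
      (⟨c₁ + (x : ℕ) - c₁, h⟩ : Fin c₂) = x := fun x h =>
    Fin.ext (show c₁ + (x : ℕ) - c₁ = (x : ℕ) by omega)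
  refine ⟨Sum.elim
    (fun a => (WithLp.toLp 2 (fun i : Fin (c₁ + c₂) => if h : (i : ℕ) < c₁ then g₁ a ⟨i, h⟩ else 0) :
      EuclideanSpace ℝ (Fin (c₁ + c₂))))
    (fun b => (WithLp.toLp 2 (fun i : Fin (c₁ + c₂) => if h : (i : ℕ) < c₁ then 0 else g₂ b ⟨(i : ℕ) - c₁, by omega⟩) :
      EuclideanSpace ℝ (Fin (c₁ + c₂)))), ?_, ?_⟩
  · rintro (a | b) hv
    · apply h₁.1 a
      ext j
      have := congrArg (fun v => v (Fin.castAdd c₂ j)) hv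
      simpa [Fin.castAdd, j.isLt] using this
    · apply h₂.1 b
      ext j
      have h2 : g₂ b ⟨c₁ + (j : ℕ) - c₁, by omega⟩ = 0 := by
        simpa [Fin.natAdd] using congrArg (fun v => v (Fin.natAdd c₁ j)) hv
      rwa [hmk] at h2
  · rintro (a | b) (a' | b') hadj
    · have h0 := h₁.2 (show G₁.Adj a a' from hadj)
      rw [PiLp.inner_apply] at h0 ⊢
      rw [Fin.sum_univ_add]
      simp only [Sum.elim_inl, Fin.coe_castAdd, Fin.coe_natAdd, hlt, hge, PiLp.toLp_apply, WithLp.ofLp_toLp,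
        dite_true, dite_false, Fin.eta, inner_zero_left, Finset.sum_const_zero, add_zero]
      exact h0
    · rw [PiLp.inner_apply]
      apply Finset.sum_eq_zero
      intro i _
      simp only [Sum.elim_inl, Sum.elim_inr]
      by_cases h : (i : ℕ) < c₁ <;> simp [h]
    · rw [PiLp.inner_apply]
      apply Finset.sum_eq_zero
      intro i _
      simp only [Sum.elim_inl, Sum.elim_inr]
      by_cases h : (i : ℕ) < c₁ <;> simp [h]
    · have h0 := h₂.2 (show G₂.Adj b b' from hadj)
      rw [PiLp.inner_apply] at h0 ⊢
      rw [Fin.sum_univ_add]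
      simp only [Sum.elim_inr, Fin.coe_castAdd, Fin.coe_natAdd, hlt, hge, PiLp.toLp_apply, WithLp.ofLp_toLp,
        dite_true, dite_false, inner_zero_left,
        Finset.sum_const_zero, zero_add]
      rw [← h0]
      exact Finset.sum_congr rfl fun j _ => by rw [hmk]


theorem stmt2 {V₁ V₂ : Type*} [Nonempty V₁] [Nonempty V₂]
    (G₁ : SimpleGraph V₁) (G₂ : SimpleGraph V₂) (d : ℕ)
    (f : V₁ ⊕ V₂ → EuclideanSpace ℝ (Fin d))
    (hf : IsOrthColoring (joinGraph G₁ G₂) d f) :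
    orthNumber G₁ + orthNumber G₂ ≤ d ∧
      orthNumber (joinGraph G₁ G₂) = orthNumber G₁ + orthNumber G₂ := by
  have hcol1 : IsOrthColoring G₁ d (fun a => f (Sum.inl a)) :=
    ⟨fun a => hf.1 _, fun a b h =>
      hf.2 (show (joinGraph G₁ G₂).Adj (Sum.inl a) (Sum.inl b) from h)⟩
  have hcol2 : IsOrthColoring G₂ d (fun b => f (Sum.inr b)) :=
    ⟨fun b => hf.1 _, fun a b h =>
      hf.2 (show (joinGraph G₁ G₂).Adj (Sum.inr a) (Sum.inr b) from h)⟩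
  obtain ⟨g₁, hg₁⟩ := orthNumber_spec hcol1
  obtain ⟨g₂, hg₂⟩ := orthNumber_spec hcol2
  obtain ⟨F, hF⟩ := join_coloring hg₁ hg₂
  obtain ⟨F₀, hF₀⟩ := orthNumber_spec hf
  exact ⟨key_le G₁ G₂ d f hf,
    le_antisymm (orthNumber_le hF) (key_le G₁ G₂ _ F₀ hF₀)⟩
end

section
/- If there exists a finite graph G with χ(G) − π(G) ≥ 1, then for every positive integer k there exists a graph H with χ(H) − π(H) ≥ 2^k; namely, iterating the join of a graph with itself doubles the gap between the chromatic number and the orthogonal number. -/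
open scoped RealInnerProductSpace

lemma orth_exists {V : Type*} [Fintype V] (G : SimpleGraph V) :
    ∃ f, IsOrthColoring G (Fintype.card V) f := by
  classical
  refine ⟨fun v => EuclideanSpace.single ((Fintype.equivFin V) v) 1, fun v => ?_, ?_⟩
  · intro h
    have := congrArg (· ((Fintype.equivFin V) v)) h
    simp [EuclideanSpace.single_apply] at this
  · intro u v huv
    rw [EuclideanSpace.inner_single_left]
    simp [EuclideanSpace.single_apply, (Fintype.equivFin V).injective.ne huv.ne]

-- join of orth colorings
lemma orth_join {V₁ V₂ : Type*} {G₁ : SimpleGraph V₁} {G₂ : SimpleGraph V₂}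
    {d₁ d₂ : ℕ} {f : V₁ → EuclideanSpace ℝ (Fin d₁)} {g : V₂ → EuclideanSpace ℝ (Fin d₂)}
    (hf : IsOrthColoring G₁ d₁ f) (hg : IsOrthColoring G₂ d₂ g) :
    ∃ h, IsOrthColoring (joinGraph G₁ G₂) (d₁ + d₂) h := by
  refine ⟨fun w => match w with
    | .inl v => WithLp.toLp 2 (fun i => Fin.addCases (fun i₁ => f v i₁) (fun _ => (0:ℝ)) i)
    | .inr v => WithLp.toLp 2 (fun i => Fin.addCases (fun _ => (0:ℝ)) (fun i₂ => g v i₂) i), ?_, ?_⟩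
  · rintro (v|v) h
    · obtain ⟨i, hi⟩ : ∃ i, f v i ≠ 0 := by
        by_contra hc; push_neg at hc; exact hf.1 v (PiLp.ext hc)
      apply hi
      have := congrArg (· (Fin.castAdd d₂ i)) h
      simpa using this
    · obtain ⟨i, hi⟩ : ∃ i, g v i ≠ 0 := by
        by_contra hc; push_neg at hc; exact hg.1 v (PiLp.ext hc)
      apply hi
      have := congrArg (· (Fin.natAdd d₁ i)) h
      simpa using this
  · rintro (u|u) (v|v) huv <;>
      simp only [PiLp.inner_apply, PiLp.toLp_apply, RCLike.inner_apply, conj_trivial, Fin.sum_univ_add,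
        Fin.addCases_left, Fin.addCases_right, mul_zero, zero_mul, Finset.sum_const_zero,
        add_zero, zero_add]
    · have := hf.2 huv
      simpa [PiLp.inner_apply] using this
    · have := hg.2 huv
      simpa [PiLp.inner_apply] using this

lemma join_colorable_split {V₁ V₂ : Type*} {G₁ : SimpleGraph V₁} {G₂ : SimpleGraph V₂}
    {n : ℕ} (hc : (joinGraph G₁ G₂).Colorable n) :
    ∃ n₁ n₂, G₁.Colorable n₁ ∧ G₂.Colorable n₂ ∧ n₁ + n₂ ≤ n := by
  classical
  obtain ⟨c⟩ := hc
  set A : Finset (Fin n) := Finset.univ.filter (fun x => ∃ v, c (.inl v) = x) with hA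
  set B : Finset (Fin n) := Finset.univ.filter (fun x => ∃ v, c (.inr v) = x) with hB
  have hAB : Disjoint A B := by
    rw [Finset.disjoint_left]
    rintro x hx hx'
    simp only [hA, hB, Finset.mem_filter, Finset.mem_univ, true_and] at hx hx'
    obtain ⟨u, rfl⟩ := hx
    obtain ⟨w, hw⟩ := hx'
    exact c.valid (show (joinGraph G₁ G₂).Adj (.inl u) (.inr w) from trivial) hw.symm
  have h1 : G₁.Colorable A.card := by
    have C : G₁.Coloring A := SimpleGraph.Coloring.mk
      (fun v => ⟨c (.inl v), by simp [hA]⟩)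
      (fun {u v} huv h => c.valid (show (joinGraph G₁ G₂).Adj (.inl u) (.inl v) from huv)
        (by simpa using congrArg Subtype.val h))
    simpa using C.colorable
  have h2 : G₂.Colorable B.card := by
    have C : G₂.Coloring B := SimpleGraph.Coloring.mk
      (fun v => ⟨c (.inr v), by simp [hB]⟩)
      (fun {u v} huv h => c.valid (show (joinGraph G₁ G₂).Adj (.inr u) (.inr v) from huv)
        (by simpa using congrArg Subtype.val h))
    simpa using C.colorable
  refine ⟨A.card, B.card, h1, h2, ?_⟩
  rw [← Finset.card_union_of_disjoint hAB]
  simpa using (A ∪ B).card_le_univ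

lemma gap_double {V : Type} [Fintype V] (G : SimpleGraph V) (c : ℕ∞)
    (h : (orthNumber G : ℕ∞) + c ≤ G.chromaticNumber) :
    (orthNumber (joinGraph G G) : ℕ∞) + 2 * c ≤ (joinGraph G G).chromaticNumber := by
  classical
  set J := joinGraph G G with hJ
  -- orth number bound
  have hne : {d | ∃ f, IsOrthColoring G d f}.Nonempty := ⟨_, orth_exists G⟩
  obtain ⟨f, hf⟩ : ∃ f, IsOrthColoring G (orthNumber G) f := Nat.sInf_mem hne
  have hπ : orthNumber J ≤ orthNumber G + orthNumber G :=
    Nat.sInf_le (orth_join hf hf)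
  -- chromatic bound
  have hJcol : J.Colorable (ENat.toNat J.chromaticNumber) :=
    J.colorable_chromaticNumber_of_fintype
  obtain ⟨n₁, n₂, h1, h2, hsum⟩ := join_colorable_split hJcol
  have hχtop : J.chromaticNumber ≠ ⊤ :=
    SimpleGraph.chromaticNumber_ne_top_iff_exists.2 ⟨_, hJcol⟩
  have hχ : G.chromaticNumber + G.chromaticNumber ≤ J.chromaticNumber := by
    calc G.chromaticNumber + G.chromaticNumber ≤ (n₁ : ℕ∞) + n₂ :=
          add_le_add h1.chromaticNumber_le h2.chromaticNumber_le
      _ = ((n₁ + n₂ : ℕ) : ℕ∞) := by push_cast; ring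
      _ ≤ ((ENat.toNat J.chromaticNumber : ℕ) : ℕ∞) := by exact_mod_cast hsum
      _ = J.chromaticNumber := ENat.coe_toNat hχtop
  calc (orthNumber J : ℕ∞) + 2 * c
      ≤ ((orthNumber G + orthNumber G : ℕ) : ℕ∞) + 2 * c := by
        exact add_le_add_left (by exact_mod_cast hπ) _
    _ = ((orthNumber G : ℕ∞) + c) + ((orthNumber G : ℕ∞) + c) := by push_cast; ring
    _ ≤ G.chromaticNumber + G.chromaticNumber := add_le_add h h
    _ ≤ J.chromaticNumber := hχ


theorem stmt4
    (h : ∃ (V : Type) (_ : Fintype V) (G : SimpleGraph V),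
      (orthNumber G : ℕ∞) + 1 ≤ G.chromaticNumber) :
    ∀ k : ℕ, 0 < k → ∃ (W : Type) (_ : Fintype W) (H : SimpleGraph W),
      (orthNumber H : ℕ∞) + 2 ^ k ≤ H.chromaticNumber := by
  have key : ∀ k : ℕ, ∃ (W : Type) (_ : Fintype W) (H : SimpleGraph W),
      (orthNumber H : ℕ∞) + 2 ^ k ≤ H.chromaticNumber := by
    intro k
    induction k with
    | zero => simpa using h
    | succ k ih =>
      obtain ⟨W, _, H, hH⟩ := ih
      refine ⟨W ⊕ W, inferInstance, joinGraph H H, ?_⟩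
      have := gap_double H (2 ^ k) hH
      rwa [pow_succ, mul_comm]
  exact fun k _ => key k
end
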